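/- Let B ∈ (0,1), ε ∈ (0, 1−B), θ ∈ (0,1], and s > θ(B+ε)/(1 − (1−θ)(B+ε)) with s > 0. Let {x_n} be a decreasing positive sequence with x_n ≤ n^{-(1−(B+ε))/(B+ε)} for all n ≥ N. Then for all sufficiently small δ > 0, the set {x_n : n ≥ 1} can be covered by a family U of intervals with diameters in [δ, δ^θ] such that ∑_{U ∈ U} |U|^s → 0 as δ → 0. Specifically, covering the first K := ⌈δ^{−(B+ε)(s+θ(1−s))}⌉ points by K intervals of length δ and the tail, contained in [0, x_K], by ⌈x_K/δ^θ⌉ intervals of length δ^θ yields a cover with ∑ |U|^s ≤ (δ^{−(B+ε)(s+θ(1−s))}+1)δ^s + δ^{θ(s−1)}δ^{(s+θ(1−s))(1−(B+ε))} + δ^{θs}, and each of these three terms tends to 0 as δ → 0. -/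

import Mathlib

open Filter Set Topology

private lemma rpow_tendsto_zero' {c : ℝ} (hc : 0 < c) :
    Tendsto (fun δ : ℝ => δ ^ c) (nhdsWithin 0 (Set.Ioi 0)) (nhds 0) := by
  have h : ContinuousAt (fun δ : ℝ => δ ^ c) 0 :=
    Real.continuousAt_rpow_const 0 c (Or.inr hc.le)
  have h2 := h.tendsto
  rw [Real.zero_rpow hc.ne'] at h2
  exact h2.mono_left nhdsWithin_le_nhds

private lemma rpow_neg_tendsto_atTop' {a : ℝ} (ha : 0 < a) :
    Tendsto (fun δ : ℝ => δ ^ (-a)) (nhdsWithin 0 (Set.Ioi 0)) atTop := by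
  have h1 : Tendsto (fun δ : ℝ => δ ^ a) (nhdsWithin 0 (Set.Ioi 0))
      (nhdsWithin 0 (Set.Ioi 0)) := by
    rw [tendsto_nhdsWithin_iff]
    refine ⟨rpow_tendsto_zero' ha, ?_⟩
    filter_upwards [self_mem_nhdsWithin] with δ hδ
    exact Real.rpow_pos_of_pos hδ a
  have h2 := h1.inv_tendsto_nhdsGT_zero
  refine h2.congr' ?_
  filter_upwards [self_mem_nhdsWithin] with δ hδ
  simp [Real.rpow_neg (le_of_lt hδ)]

/-- Explicit covering estimate for the tail sequence: the three-term bound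
`(δ^{-(B+ε)(s+θ(1-s))}+1)δ^s + δ^{θ(s-1)}δ^{(s+θ(1-s))(1-(B+ε))} + δ^{θs}`
tends to 0 as `δ → 0⁺`, and for all sufficiently small `δ > 0` the set
`{x_n : n ≥ 1}` admits a cover by intervals with diameters in `[δ, δ^θ]`
whose `s`-cost is at most this bound. -/
theorem covering_strategy_Da (B ε θ s : ℝ)
    (hB : B ∈ Set.Ioo (0:ℝ) 1) (hε : ε ∈ Set.Ioo (0:ℝ) (1 - B))
    (hθ : θ ∈ Set.Ioc (0:ℝ) 1) (hs : 0 < s)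
    (hsBig : θ * (B + ε) / (1 - (1 - θ) * (B + ε)) < s)
    (x : ℕ → ℝ) (hxpos : ∀ n ≥ 1, 0 < x n) (hxdec : ∀ n ≥ 1, x (n + 1) ≤ x n)
    (N : ℕ) (hN : 1 ≤ N)
    (hxbound : ∀ n ≥ N, x n ≤ (n : ℝ) ^ (-((1 - (B + ε)) / (B + ε)))) :
    Tendsto (fun δ : ℝ =>
        (δ ^ (-((B + ε) * (s + θ * (1 - s)))) + 1) * δ ^ s
          + δ ^ (θ * (s - 1)) * δ ^ ((s + θ * (1 - s)) * (1 - (B + ε)))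
          + δ ^ (θ * s))
      (nhdsWithin 0 (Set.Ioi 0)) (nhds 0)
    ∧ ∀ᶠ δ : ℝ in nhdsWithin 0 (Set.Ioi 0),
        ∃ (I : Finset ℕ) (U : ℕ → Set ℝ),
          ({y : ℝ | ∃ n ≥ 1, y = x n} ⊆ ⋃ i ∈ I, U i) ∧
          (∀ i ∈ I, δ ≤ Metric.diam (U i) ∧ Metric.diam (U i) ≤ δ ^ θ) ∧
          ∑ i ∈ I, Metric.diam (U i) ^ s ≤
            (δ ^ (-((B + ε) * (s + θ * (1 - s)))) + 1) * δ ^ s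
              + δ ^ (θ * (s - 1)) * δ ^ ((s + θ * (1 - s)) * (1 - (B + ε)))
              + δ ^ (θ * s) := by
  obtain ⟨hB0, hB1⟩ := hB
  obtain ⟨hε0, hε1⟩ := hε
  obtain ⟨hθ0, hθ1⟩ := hθ
  set b : ℝ := B + ε with hbdef
  have hb0 : 0 < b := by simp only [hbdef]; linarith
  have hb1 : b < 1 := by simp only [hbdef]; linarith
  have hden : 0 < 1 - (1 - θ) * b := by nlinarith
  have hkey : 0 < s - b * (s + θ * (1 - s)) := by
    rw [div_lt_iff₀ hden] at hsBig
    nlinarith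
  set a : ℝ := b * (s + θ * (1 - s)) with hadef
  have hsθ : 0 < s + θ * (1 - s) := by nlinarith
  have ha0 : 0 < a := mul_pos hb0 hsθ
  have hθs : 0 < θ * s := mul_pos hθ0 hs
  -- exponent identity for the middle term
  have hexp : θ * (s - 1) + (s + θ * (1 - s)) * (1 - b) = s - a := by
    simp only [hadef]; ring
  constructor
  · -- the tendsto claim
    have hg : Tendsto (fun δ : ℝ =>
        δ ^ (s - a) + δ ^ s + δ ^ (s - a) + δ ^ (θ * s))
        (nhdsWithin 0 (Set.Ioi 0)) (nhds 0) := by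
      have := ((((rpow_tendsto_zero' hkey).add (rpow_tendsto_zero' hs)).add
        (rpow_tendsto_zero' hkey)).add (rpow_tendsto_zero' hθs))
      simpa using this
    refine hg.congr' ?_
    filter_upwards [self_mem_nhdsWithin] with δ hδ
    have hδ0 : (0:ℝ) < δ := hδ
    have e1 : δ ^ (s - a) = δ ^ (-a) * δ ^ s := by
      rw [← Real.rpow_add hδ0]; ring_nf
    have e2 : δ ^ (θ * (s - 1)) * δ ^ ((s + θ * (1 - s)) * (1 - b)) = δ ^ (s - a) := by
      rw [← Real.rpow_add hδ0, hexp]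
    have e3 : (δ ^ (-a) + 1) * δ ^ s = δ ^ (s - a) + δ ^ s := by
      rw [add_mul, one_mul, ← Real.rpow_add hδ0, neg_add_eq_sub]
    rw [e3, e2]
  · -- the covering claim
    have hmono : ∀ n m : ℕ, 1 ≤ n → n ≤ m → x m ≤ x n := by
      intro n m h1 hnm
      induction m with
      | zero => omega
      | succ k ih =>
        rcases Nat.lt_or_ge n (k + 1) with h | h
        · have hk1 : 1 ≤ k := by omega
          exact le_trans (hxdec k hk1) (ih (by omega))
        · have : n = k + 1 := by omega
          simp [this]
    have hev1 : ∀ᶠ δ : ℝ in nhdsWithin 0 (Set.Ioi 0), δ ∈ Set.Ioo (0:ℝ) 1 :=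
      Ioo_mem_nhdsGT_of_mem ⟨le_refl 0, one_pos⟩
    have hev2 : ∀ᶠ δ : ℝ in nhdsWithin 0 (Set.Ioi 0), (N : ℝ) ≤ δ ^ (-a) :=
      (rpow_neg_tendsto_atTop' ha0).eventually (eventually_ge_atTop (N:ℝ))
    filter_upwards [hev1, hev2] with δ hδIoo hδN
    obtain ⟨hδ0, hδ1⟩ := hδIoo
    have hδθ0 : 0 < δ ^ θ := Real.rpow_pos_of_pos hδ0 θ
    have hδleθ : δ ≤ δ ^ θ := by
      calc δ = δ ^ (1:ℝ) := (Real.rpow_one δ).symm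
        _ ≤ δ ^ θ := Real.rpow_le_rpow_of_exponent_ge hδ0 hδ1.le hθ1
    set K : ℕ := ⌈δ ^ (-a)⌉₊ with hKdef
    have hKge : δ ^ (-a) ≤ (K : ℝ) := Nat.le_ceil _
    have hKub : (K : ℝ) ≤ δ ^ (-a) + 1 :=
      (Nat.ceil_lt_add_one (by positivity)).le
    have hNK : N ≤ K := by exact_mod_cast le_trans hδN hKge
    have hK1 : 1 ≤ K := le_trans hN hNK
    have hxK0 : 0 < x K := hxpos K hK1
    -- bound on x K
    have hxKb : x K ≤ δ ^ ((s + θ * (1 - s)) * (1 - b)) := by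
      have h1 : x K ≤ (K : ℝ) ^ (-((1 - b) / b)) := hxbound K hNK
      have h2 : (K : ℝ) ^ (-((1 - b) / b)) ≤ (δ ^ (-a)) ^ (-((1 - b) / b)) := by
        refine Real.rpow_le_rpow_of_nonpos (by positivity) hKge ?_
        rw [neg_nonpos]
        exact div_nonneg (by linarith) hb0.le
      have h3 : (δ ^ (-a)) ^ (-((1 - b) / b)) = δ ^ ((s + θ * (1 - s)) * (1 - b)) := by
        rw [← Real.rpow_mul hδ0.le]
        congr 1
        field_simp
        ring
      calc x K ≤ _ := h1
        _ ≤ _ := h2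
        _ = _ := h3
    set M : ℕ := ⌈x K / δ ^ θ⌉₊ with hMdef
    have hM1 : 1 ≤ M := Nat.ceil_pos.mpr (by positivity)
    have hMge : x K / δ ^ θ ≤ (M : ℝ) := Nat.le_ceil _
    have hMub : (M : ℝ) ≤ x K / δ ^ θ + 1 := (Nat.ceil_lt_add_one (by positivity)).le
    set U : ℕ → Set ℝ := fun i => if i < K then Set.Icc (x (i + 1)) (x (i + 1) + δ)
      else Set.Icc (((i - K : ℕ) : ℝ) * δ ^ θ) ((((i - K : ℕ) : ℝ) + 1) * δ ^ θ) with hUdef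
    refine ⟨Finset.range (K + M), U, ?_, ?_, ?_⟩
    · -- coverage
      rintro y ⟨n, hn1, rfl⟩
      rcases le_or_gt n K with hnK | hnK
      · refine Set.mem_iUnion₂.mpr ⟨n - 1, Finset.mem_range.mpr (by omega), ?_⟩
        have hlt : n - 1 < K := by omega
        have hn' : n - 1 + 1 = n := by omega
        simp only [hUdef, if_pos hlt, hn']
        exact Set.mem_Icc.mpr ⟨le_refl _, by linarith⟩
      · have hxn0 : 0 < x n := hxpos n hn1
        have hxnK : x n ≤ x K := hmono K n hK1 hnK.le
        set j : ℕ := min (⌊x n / δ ^ θ⌋₊) (M - 1) with hjdef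
        have hjM : j < M := by
          have := min_le_right (⌊x n / δ ^ θ⌋₊) (M - 1)
          omega
        refine Set.mem_iUnion₂.mpr ⟨K + j, Finset.mem_range.mpr (by omega), ?_⟩
        have hnotlt : ¬ (K + j < K) := by omega
        have hsub : K + j - K = j := by omega
        simp only [hUdef, if_neg hnotlt, hsub]
        refine Set.mem_Icc.mpr ⟨?_, ?_⟩
        · have h4 : (j : ℝ) ≤ x n / δ ^ θ := by
            calc (j : ℝ) ≤ (⌊x n / δ ^ θ⌋₊ : ℝ) := by
                  exact_mod_cast min_le_left (⌊x n / δ ^ θ⌋₊) (M - 1)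
              _ ≤ x n / δ ^ θ := Nat.floor_le (by positivity)
          calc (j : ℝ) * δ ^ θ ≤ (x n / δ ^ θ) * δ ^ θ :=
                mul_le_mul_of_nonneg_right h4 hδθ0.le
            _ = x n := by field_simp
        · rcases le_or_gt (⌊x n / δ ^ θ⌋₊) (M - 1) with hc | hc
          · have hj : j = ⌊x n / δ ^ θ⌋₊ := min_eq_left hc
            have h5 : x n / δ ^ θ < (j : ℝ) + 1 := by
              rw [hj]; exact Nat.lt_floor_add_one _
            have h6 := (div_lt_iff₀ hδθ0).mp h5
            linarith
          · have hj : j = M - 1 := min_eq_right (by omega)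
            have hjj : (j : ℝ) + 1 = (M : ℝ) := by
              rw [hj]
              push_cast [Nat.cast_sub hM1]
              ring
            rw [hjj]
            have h7 := (div_le_iff₀ hδθ0).mp hMge
            linarith
    · -- diameters
      intro i _
      by_cases hiK : i < K
      · simp only [hUdef, if_pos hiK]
        rw [Real.diam_Icc (by linarith), add_sub_cancel_left]
        exact ⟨le_refl _, hδleθ⟩
      · simp only [hUdef, if_neg hiK]
        have hc0 : (0:ℝ) ≤ ((i - K : ℕ) : ℝ) := Nat.cast_nonneg _
        rw [Real.diam_Icc (mul_le_mul_of_nonneg_right (by linarith) hδθ0.le),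
          show (((i - K : ℕ) : ℝ) + 1) * δ ^ θ - ((i - K : ℕ) : ℝ) * δ ^ θ = δ ^ θ by ring]
        exact ⟨hδleθ, le_refl _⟩
    · -- sum bound
      have hdiam1 : ∀ i, i < K → Metric.diam (U i) ^ s = δ ^ s := by
        intro i hiK
        simp only [hUdef, if_pos hiK]
        rw [Real.diam_Icc (by linarith), add_sub_cancel_left]
      have hdiam2 : ∀ i, ¬ i < K → Metric.diam (U i) ^ s = δ ^ (θ * s) := by
        intro i hiK
        have hc0 : (0:ℝ) ≤ ((i - K : ℕ) : ℝ) := Nat.cast_nonneg _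
        simp only [hUdef, if_neg hiK]
        rw [Real.diam_Icc (mul_le_mul_of_nonneg_right (by linarith) hδθ0.le),
          show (((i - K : ℕ) : ℝ) + 1) * δ ^ θ - ((i - K : ℕ) : ℝ) * δ ^ θ = δ ^ θ by ring,
          Real.rpow_mul hδ0.le]
      rw [Finset.sum_range_add]
      have hs1 : ∑ i ∈ Finset.range K, Metric.diam (U i) ^ s = (K : ℝ) * δ ^ s := by
        rw [Finset.sum_congr rfl fun i hi => hdiam1 i (Finset.mem_range.mp hi),
          Finset.sum_const, Finset.card_range, nsmul_eq_mul]
      have hs2 : ∑ i ∈ Finset.range M, Metric.diam (U (K + i)) ^ s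
          = (M : ℝ) * δ ^ (θ * s) := by
        rw [Finset.sum_congr rfl fun i hi => hdiam2 (K + i) (by omega),
          Finset.sum_const, Finset.card_range, nsmul_eq_mul]
      rw [hs1, hs2]
      have hb1' : (K : ℝ) * δ ^ s ≤ (δ ^ (-a) + 1) * δ ^ s :=
        mul_le_mul_of_nonneg_right hKub (by positivity)
      have hb2 : (M : ℝ) * δ ^ (θ * s)
          ≤ δ ^ (θ * (s - 1)) * δ ^ ((s + θ * (1 - s)) * (1 - b)) + δ ^ (θ * s) := by
        have e4 : δ ^ (θ * s) / δ ^ θ = δ ^ (θ * (s - 1)) := by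
          rw [← Real.rpow_sub hδ0]; congr 1; ring
        have h8 : (M : ℝ) * δ ^ (θ * s) ≤ (x K / δ ^ θ + 1) * δ ^ (θ * s) :=
          mul_le_mul_of_nonneg_right hMub (by positivity)
        have e5 : (x K / δ ^ θ + 1) * δ ^ (θ * s)
            = x K * (δ ^ (θ * s) / δ ^ θ) + δ ^ (θ * s) := by ring
        rw [e5, e4] at h8
        have e6 : x K * δ ^ (θ * (s - 1))
            ≤ δ ^ (θ * (s - 1)) * δ ^ ((s + θ * (1 - s)) * (1 - b)) := by
          rw [mul_comm (δ ^ (θ * (s - 1)))]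
          exact mul_le_mul_of_nonneg_right hxKb (by positivity)
        linarith
      linarith
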